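/- Let $T$ be an ergodic automorphism of a probability space $(X,\mathcal{B},\mu)$ and $\{W_n\}$ a sequence of Rokhlin towers, $W_n = \bigcup_{i=0}^{q_n-1} T^i J_n$ with the sets $T^i J_n$, $0 \leq i < q_n$, pairwise disjoint. Suppose $\liminf_n \mu(W_n) > 0$ and $\mu(J_n) \to 0$. Then for $\mu$-almost every $x \in X$, $x \in W_n$ for infinitely many $n$. -/

import Mathlib

open MeasureTheory Filter
open scoped ENNReal

/-- If `W n` are Rokhlin towers over bases `J n` with `liminf μ(W n) > 0` and
`μ(J n) → 0`, then almost every point belongs to `W n` for infinitely many `n`. -/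
theorem stmt14 {X : Type*} [MeasurableSpace X] (μ : Measure X) [IsProbabilityMeasure μ]
    (T : X → X) (hT : MeasurePreserving T μ μ) (hbij : Function.Bijective T)
    (hErg : Ergodic T μ)
    (q : ℕ → ℕ) (J : ℕ → Set X) (hJmeas : ∀ n, MeasurableSet (J n))
    (hlevels : ∀ n i, MeasurableSet (T^[i] '' J n))
    (hdisj : ∀ n, ∀ i < q n, ∀ j < q n, i ≠ j → Disjoint (T^[i] '' J n) (T^[j] '' J n))
    (W : ℕ → Set X) (hW : ∀ n, W n = ⋃ i ∈ Finset.range (q n), T^[i] '' J n)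
    (hpos : 0 < atTop.liminf (fun n => μ (W n)))
    (hJ0 : Tendsto (fun n => μ (J n)) atTop (nhds 0)) :
    ∀ᵐ x ∂μ, ∃ᶠ n in atTop, x ∈ W n := by
  classical
  have hTm : Measurable T := hT.measurable
  -- each level has the same measure as the base
  have hlevel : ∀ n i, μ (T^[i] '' J n) = μ (J n) := by
    intro n i
    have hinj : Function.Injective (T^[i]) := hbij.1.iterate i
    have h := (hT.iterate i).measure_preimage (hlevels n i).nullMeasurableSet
    rw [Set.preimage_image_eq _ hinj] at h
    exact h.symm
  have hWmeas : ∀ n, MeasurableSet (W n) := fun n => by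
    rw [hW n]
    exact (Finset.range (q n)).measurableSet_biUnion (fun i _ => hlevels n i)
  set c := atTop.liminf (fun n => μ (W n)) with hcdef
  have hcpos : 0 < c := hpos
  have hc1 : c ≤ 1 := by
    refine liminf_le_of_frequently_le (Frequently.of_forall fun n => ?_)
    exact prob_le_one
  have hcne : c ≠ ⊤ := ne_top_of_le_ne_top ENNReal.one_ne_top hc1
  have hε2pos : 0 < c / 2 / 2 := ENNReal.half_pos (ENNReal.half_pos hcpos.ne').ne'
  have hε2ne : c / 2 / 2 ≠ ⊤ :=
    ne_top_of_le_ne_top hcne ((ENNReal.half_le_self).trans ENNReal.half_le_self)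
  -- main claim: for every N, the set of points missing all towers W n, n ≥ N, is null
  have main : ∀ N : ℕ, μ (⋂ n, ⋂ (_ : N ≤ n), (W n)ᶜ) = 0 := by
    intro N
    by_contra hB0
    set B : Set X := ⋂ n, ⋂ (_ : N ≤ n), (W n)ᶜ with hBdef
    have hBmeas : MeasurableSet B :=
      MeasurableSet.iInter fun n => MeasurableSet.iInter fun _ => (hWmeas n).compl
    have hBW : ∀ n, N ≤ n → W n ⊆ Bᶜ := by
      intro n hn x hx hxB
      exact (Set.mem_iInter.1 (Set.mem_iInter.1 hxB n) hn) hx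
    -- the sets of points avoiding B for the first m steps
    set Dm : ℕ → Set X := fun m => ⋂ i ∈ Finset.range m, T^[i] ⁻¹' Bᶜ with hDmdef
    have hDm_meas : ∀ m, MeasurableSet (Dm m) := fun m =>
      (Finset.range m).measurableSet_biInter fun i _ => (hBmeas.compl).preimage (hTm.iterate i)
    -- key estimate: μ (Dm m) ≥ c/4 for all m
    have key2 : ∀ m : ℕ, c / 2 / 2 ≤ μ (Dm m) := by
      intro m
      have hev1 : ∀ᶠ n in atTop, c / 2 < μ (W n) :=
        eventually_lt_of_lt_liminf (ENNReal.half_lt_self hcpos.ne' hcne)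
      have hev2 : ∀ᶠ n in atTop, (m : ℝ≥0∞) * μ (J n) < c / 2 / 2 := by
        have h := ENNReal.Tendsto.const_mul (a := (m : ℝ≥0∞)) hJ0
          (Or.inr (ENNReal.natCast_ne_top m))
        rw [mul_zero] at h
        exact h.eventually_lt_const hε2pos
      obtain ⟨n, hn1, hn2, hnN⟩ := (hev1.and (hev2.and (eventually_ge_atTop N))).exists
      -- the lower part of the tower is contained in Dm m
      have hsub : (⋃ i ∈ Finset.range (q n - m), T^[i] '' J n) ⊆ Dm m := by
        intro x hx
        simp only [Set.mem_iUnion, Finset.mem_range, exists_prop] at hx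
        obtain ⟨i, hi, y, hy, rfl⟩ := hx
        simp only [hDmdef, Set.mem_iInter, Finset.mem_range, Set.mem_preimage]
        intro j hj
        have hmem : T^[j] (T^[i] y) ∈ W n := by
          rw [← Function.iterate_add_apply, hW n]
          exact Set.mem_biUnion (Finset.mem_range.2 (by omega)) ⟨y, hy, rfl⟩
        exact hBW n hnN hmem
      -- measure of the lower part
      have hdisj' : (↑(Finset.range (q n - m)) : Set ℕ).PairwiseDisjoint
          (fun i => T^[i] '' J n) := by
        intro i hi j hj hij
        have hi' : i < q n := lt_of_lt_of_le (Finset.mem_range.1 (Finset.mem_coe.1 hi)) (Nat.sub_le _ _)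
        have hj' : j < q n := lt_of_lt_of_le (Finset.mem_range.1 (Finset.mem_coe.1 hj)) (Nat.sub_le _ _)
        exact hdisj n i hi' j hj' hij
      have hlow : μ (⋃ i ∈ Finset.range (q n - m), T^[i] '' J n)
          = ((q n - m : ℕ) : ℝ≥0∞) * μ (J n) := by
        rw [measure_biUnion_finset hdisj' (fun i _ => hlevels n i)]
        rw [Finset.sum_congr rfl (fun i _ => hlevel n i), Finset.sum_const,
          Finset.card_range, nsmul_eq_mul]
      have hWle : μ (W n) ≤ (q n : ℝ≥0∞) * μ (J n) := by
        rw [hW n]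
        calc μ (⋃ i ∈ Finset.range (q n), T^[i] '' J n)
            ≤ ∑ i ∈ Finset.range (q n), μ (T^[i] '' J n) := measure_biUnion_finset_le _ _
          _ = (q n : ℝ≥0∞) * μ (J n) := by
              rw [Finset.sum_congr rfl (fun i _ => hlevel n i), Finset.sum_const,
                Finset.card_range, nsmul_eq_mul]
      have h1 : c / 2 ≤ ((q n - m : ℕ) : ℝ≥0∞) * μ (J n) + (m : ℝ≥0∞) * μ (J n) := by
        calc c / 2 ≤ μ (W n) := hn1.le
          _ ≤ (q n : ℝ≥0∞) * μ (J n) := hWle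
          _ ≤ (((q n - m : ℕ) : ℝ≥0∞) + (m : ℝ≥0∞)) * μ (J n) := by
              refine mul_le_mul_left ?_ _
              exact_mod_cast (le_tsub_add : q n ≤ q n - m + m)
          _ = _ := add_mul _ _ _
      have h2 : c / 2 / 2 + (m : ℝ≥0∞) * μ (J n)
          ≤ ((q n - m : ℕ) : ℝ≥0∞) * μ (J n) + (m : ℝ≥0∞) * μ (J n) := by
        refine le_trans ?_ h1
        calc c / 2 / 2 + (m : ℝ≥0∞) * μ (J n) ≤ c / 2 / 2 + c / 2 / 2 :=
              add_le_add_right hn2.le _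
          _ = c / 2 := ENNReal.add_halves _
      have hfin : (m : ℝ≥0∞) * μ (J n) ≠ ⊤ := (hn2.trans_le le_top).ne
      have h3 : c / 2 / 2 ≤ ((q n - m : ℕ) : ℝ≥0∞) * μ (J n) :=
        (ENNReal.add_le_add_iff_right hfin).1 h2
      calc c / 2 / 2 ≤ μ (⋃ i ∈ Finset.range (q n - m), T^[i] '' J n) := hlow ▸ h3
        _ ≤ μ (Dm m) := measure_mono hsub
    -- the set of points whose orbit never enters B
    set D : Set X := ⋂ i : ℕ, T^[i] ⁻¹' Bᶜ with hDdef
    have hDmeas : MeasurableSet D :=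
      MeasurableSet.iInter fun i => (hBmeas.compl).preimage (hTm.iterate i)
    have hDeq : ⋂ m, Dm m = D := by
      ext x
      simp only [hDmdef, hDdef, Set.mem_iInter, Finset.mem_range, Set.mem_preimage]
      exact ⟨fun h i => h (i + 1) i i.lt_succ_self, fun h m i _ => h i⟩
    have hDm_anti : Antitone Dm := by
      intro a b hab
      refine Set.biInter_subset_biInter_left ?_
      intro i hi
      exact Finset.mem_range.2 (lt_of_lt_of_le (Finset.mem_range.1 hi) hab)
    have hDge : c / 2 / 2 ≤ μ D := by
      rw [← hDeq]
      have ht := tendsto_measure_iInter_atTop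
        (fun m => (hDm_meas m).nullMeasurableSet) hDm_anti ⟨0, measure_ne_top μ _⟩
      exact ge_of_tendsto ht (Eventually.of_forall key2)
    -- D is forward invariant, hence by ergodicity has measure 0 or 1
    have hsubD : D ⊆ T ⁻¹' D := by
      intro x hx
      simp only [hDdef, Set.mem_preimage, Set.mem_iInter] at hx ⊢
      intro i
      rw [← Function.iterate_succ_apply]
      exact hx (i + 1)
    have h01 := hErg.ae_empty_or_univ_of_ae_le_preimage' hDmeas.nullMeasurableSet
      (HasSubset.Subset.eventuallyLE hsubD) (measure_ne_top μ _)
    have hD1 : μ D = 1 := by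
      rcases h01 with h | h
      · exfalso
        have : μ D = 0 := by simpa using h.measure_eq
        rw [this] at hDge
        exact hε2pos.not_ge hDge
      · have := h.measure_eq
        simpa using this
    have hBD : B ⊆ Dᶜ := by
      intro x hx hxD
      have h0 := Set.mem_iInter.1 hxD 0
      simp only [Function.iterate_zero, Set.mem_preimage, id_eq, Set.mem_compl_iff] at h0
      exact h0 hx
    have hB0' : μ B = 0 := by
      have hle : μ B ≤ μ Dᶜ := measure_mono hBD
      rw [measure_compl hDmeas (measure_ne_top μ _), hD1, measure_univ, tsub_self] at hle
      exact le_antisymm hle zero_le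
    exact hB0 hB0'
  -- conclude
  rw [ae_iff]
  refine measure_mono_null (fun x hx => ?_) (measure_iUnion_null main)
  simp only [Set.mem_setOf_eq, not_frequently, eventually_atTop] at hx
  obtain ⟨N, hN⟩ := hx
  exact Set.mem_iUnion.2 ⟨N, Set.mem_iInter.2 fun n => Set.mem_iInter.2 fun hn => hN n hn⟩
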